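/- Under D_ε with 2/25 < ε < 1/4, the linear predictor h(X,A) = (1/2 − 2ε)A + 1/4 + ε minimizes the expected squared loss E[(w₁X + w₂A + b − Y)²] over all (w₁,w₂,b) with |w₁|+|w₂| ≤ 1/2 − 2ε; this is certified by KKT conditions with multiplier λ=1/4, where the subdifferential of the Lagrangian contains zero at (w₁,w₂,b)=(0, 1/2−2ε, 1/4+ε). -/
import Mathlib

noncomputable def pD (ε : ℝ) (x a y : Bool) : ℝ :=
  (1 / 2) * (if a = y then 1 - ε else ε) * (if x = y then 1 - 2 * ε else 2 * ε)

def ind (b : Bool) : ℝ := if b then 1 else 0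

noncomputable def Lsq (ε w1 w2 b : ℝ) : ℝ :=
  ∑ x : Bool, ∑ a : Bool, ∑ y : Bool,
    pD ε x a y * (w1 * ind x + w2 * ind a + b - ind y) ^ 2

set_option maxHeartbeats 2000000 in
theorem stmt15 (ε : ℝ) (hε0 : 2 / 25 < ε) (hε1 : ε < 1 / 4)
    (w1 w2 b : ℝ) (hcon : |w1| + |w2| ≤ 1 / 2 - 2 * ε) :
    Lsq ε 0 (1 / 2 - 2 * ε) (1 / 4 + ε) ≤ Lsq ε w1 w2 b := by
  have h1 : w1 ≤ |w1| := le_abs_self w1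
  have h2 : -w1 ≤ |w1| := neg_le_abs w1
  have h3 : w2 ≤ |w2| := le_abs_self w2
  have h4 : -w2 ≤ |w2| := neg_le_abs w2
  -- constraint consequences
  have hc1 : 0 ≤ -w1 - (w2 - (1/2 - 2*ε)) := by linarith
  have hc2 : 0 ≤ w1 - (w2 - (1/2 - 2*ε)) := by linarith
  -- nonnegative coefficients
  have hA : (0:ℝ) ≤ ((1-ε)*(1-2*ε)+2*ε^2)/2 := by nlinarith
  have hB : (0:ℝ) ≤ (3*ε-4*ε^2)/2 := by nlinarith
  have hg1 : (0:ℝ) ≤ 1/8 + (-1/4 - ε/2 + 8*ε^2 - 8*ε^3)/2 := by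
    nlinarith [mul_pos (by linarith : (0:ℝ) < ε - 2/25) (by linarith : (0:ℝ) < 1/4 - ε), sq_nonneg ε]
  have hg2 : (0:ℝ) ≤ 1/8 - (-1/4 - ε/2 + 8*ε^2 - 8*ε^3)/2 := by
    nlinarith [mul_pos (by linarith : (0:ℝ) < 1/4 - ε) (by linarith : (0:ℝ) < ε), sq_nonneg ε]
  have key : Lsq ε w1 w2 b - Lsq ε 0 (1/2 - 2*ε) (1/4 + ε) =
      ((1-ε)*(1-2*ε)+2*ε^2)/2 * (w1 + (w2 - (1/2-2*ε)) + (b - (1/4+ε)))^2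
    + (3*ε-4*ε^2)/2 * (w1 + (b - (1/4+ε)))^2
    + (3*ε-4*ε^2)/2 * ((w2 - (1/2-2*ε)) + (b - (1/4+ε)))^2
    + ((1-ε)*(1-2*ε)+2*ε^2)/2 * (b - (1/4+ε))^2
    + (1/8 + (-1/4 - ε/2 + 8*ε^2 - 8*ε^3)/2) * (w1 - (w2 - (1/2-2*ε)))
    + (1/8 - (-1/4 - ε/2 + 8*ε^2 - 8*ε^3)/2) * (-w1 - (w2 - (1/2-2*ε))) := by
    simp [Lsq, pD, ind]
    ring
  nlinarith [mul_nonneg hA (sq_nonneg (w1 + (w2 - (1/2-2*ε)) + (b - (1/4+ε)))),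
    mul_nonneg hB (sq_nonneg (w1 + (b - (1/4+ε)))),
    mul_nonneg hB (sq_nonneg ((w2 - (1/2-2*ε)) + (b - (1/4+ε)))),
    mul_nonneg hA (sq_nonneg (b - (1/4+ε))),
    mul_nonneg hg1 hc2, mul_nonneg hg2 hc1]
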